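/- Let c = (c_1,…,c_n) be a vector of non-negative integers and let u ∈ S be a c-bounded monomial. Then B^c(u) = B(u)^{≤c}; that is, a c-bounded monomial v belongs to B^c(u) (is reachable from u by a chain of Borel moves all of whose intermediate monomials are c-bounded) if and only if v belongs to B(u) (is reachable from u by an arbitrary chain of Borel moves). -/

import Mathlib

/-- A single Borel move: `b = x_i · (a / x_j)` for some `i < j` with `x_j ∣ x^a`. -/
def BorelMove {n : ℕ} (a b : Fin n →₀ ℕ) : Prop :=
  ∃ i j : Fin n, i < j ∧ a j ≠ 0 ∧ b = a - Finsupp.single j 1 + Finsupp.single i 1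

namespace BorelAux

variable {n : ℕ}

/-- prefix sum -/
def psum (a : Fin n →₀ ℕ) (k : Fin n) : ℕ := ∑ m ∈ Finset.Iic k, a m

lemma move_apply {a b : Fin n →₀ ℕ} {i j : Fin n} (hij : i ≠ j)
    (hb : b = a - Finsupp.single j 1 + Finsupp.single i 1) :
    b i = a i + 1 ∧ b j = a j - 1 ∧ ∀ m, m ≠ i → m ≠ j → b m = a m := by
  subst hb
  refine ⟨?_, ?_, ?_⟩
  · rw [Finsupp.add_apply, Finsupp.tsub_apply, Finsupp.single_apply, Finsupp.single_apply,
      if_neg (by exact fun h => hij h.symm), if_pos rfl]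
    omega
  · rw [Finsupp.add_apply, Finsupp.tsub_apply, Finsupp.single_apply, Finsupp.single_apply,
      if_pos rfl, if_neg (by exact fun h => hij h)]
    omega
  · intro m hmi hmj
    rw [Finsupp.add_apply, Finsupp.tsub_apply, Finsupp.single_apply, Finsupp.single_apply,
      if_neg (by exact fun h => hmj h.symm), if_neg (by exact fun h => hmi h.symm)]
    omega

lemma key_sum {a b : Fin n →₀ ℕ} {i j : Fin n} (hij : i < j) (hj : a j ≠ 0)
    (hb : b = a - Finsupp.single j 1 + Finsupp.single i 1) (s : Finset (Fin n)) :
    (∑ m ∈ s, b m) + (if j ∈ s then 1 else 0) =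
      (∑ m ∈ s, a m) + (if i ∈ s then 1 else 0) := by
  obtain ⟨hbi, hbj, hbo⟩ := move_apply hij.ne hb
  have hstep : ∑ m ∈ s, (b m + if m = j then 1 else 0)
      = ∑ m ∈ s, (a m + if m = i then 1 else 0) := by
    apply Finset.sum_congr rfl
    intro m _
    by_cases h1 : m = i
    · subst h1
      rw [hbi, if_neg hij.ne, if_pos rfl]
    · by_cases h2 : m = j
      · subst h2
        rw [hbj, if_pos rfl, if_neg h1]
        omega
      · rw [hbo m h1 h2, if_neg h2, if_neg h1]
  rw [Finset.sum_add_distrib, Finset.sum_add_distrib] at hstep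
  rwa [Finset.sum_ite_eq' s j (fun _ => 1), Finset.sum_ite_eq' s i (fun _ => 1)] at hstep

lemma move_dom {a b : Fin n →₀ ℕ} (h : BorelMove a b) :
    (∀ k, psum a k ≤ psum b k) ∧ (∑ m, b m = ∑ m, a m) := by
  obtain ⟨i, j, hij, hj, hb⟩ := h
  constructor
  · intro k
    have hk := key_sum hij hj hb (Finset.Iic k)
    unfold psum
    by_cases hjk : j ∈ Finset.Iic k
    · have hik : i ∈ Finset.Iic k := by
        simp only [Finset.mem_Iic] at *
        exact hij.le.trans hjk
      rw [if_pos hjk, if_pos hik] at hk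
      omega
    · rw [if_neg hjk] at hk
      by_cases hik : i ∈ Finset.Iic k
      · rw [if_pos hik] at hk; omega
      · rw [if_neg hik] at hk; omega
  · have hk := key_sum hij hj hb Finset.univ
    rw [if_pos (Finset.mem_univ j), if_pos (Finset.mem_univ i)] at hk
    omega

lemma chain_dom {a b : Fin n →₀ ℕ} (h : Relation.ReflTransGen BorelMove a b) :
    (∀ k, psum a k ≤ psum b k) ∧ (∑ m, b m = ∑ m, a m) := by
  induction h with
  | refl => exact ⟨fun _ => le_rfl, rfl⟩
  | tail _ hmv ih =>
    obtain ⟨h1, h2⟩ := move_dom hmv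
    exact ⟨fun k => (ih.1 k).trans (h1 k), h2.trans ih.2⟩

lemma build (c : Fin n → ℕ) (v : Fin n →₀ ℕ) (hv : ∀ i, v i ≤ c i) :
    ∀ d : ℕ, ∀ u : Fin n →₀ ℕ, (∀ i, u i ≤ c i) →
      (∀ k, psum u k ≤ psum v k) → (∑ m, u m = ∑ m, v m) →
      (∑ m, ((v m - u m) + (u m - v m)) ≤ d) →
      Relation.ReflTransGen (fun a b => BorelMove a b ∧ ∀ i, b i ≤ c i) u v := by
  intro d
  induction d with
  | zero =>
    intro u _ _ _ hd
    have : u = v := by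
      ext m
      have hm : (v m - u m) + (u m - v m) = 0 :=
        Nat.eq_zero_of_le_zero (le_trans (Finset.single_le_sum
          (f := fun m => (v m - u m) + (u m - v m)) (fun _ _ => Nat.zero_le _)
          (Finset.mem_univ m)) hd)
      omega
    rw [this]
  | succ d ih =>
    intro u hu hdom htot hd
    by_cases huv : u = v
    · rw [huv]
    · -- smallest index where they differ
      have hsne : (Finset.univ.filter (fun m => u m ≠ v m)).Nonempty := by
        by_contra h
        apply huv
        ext m
        by_contra hm
        exact h ⟨m, Finset.mem_filter.mpr ⟨Finset.mem_univ m, hm⟩⟩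
      set i := (Finset.univ.filter (fun m => u m ≠ v m)).min' hsne with hi_def
      have hi_mem : u i ≠ v i := by
        have := Finset.min'_mem _ hsne
        exact (Finset.mem_filter.mp this).2
      have hi_min : ∀ m, m < i → u m = v m := by
        intro m hm
        by_contra hne
        exact absurd (Finset.min'_le _ m (Finset.mem_filter.mpr ⟨Finset.mem_univ m, hne⟩))
          (not_le.mpr hm)
      have hilt : u i < v i := by
        have hpi := hdom i
        unfold psum at hpi
        rw [← Finset.Iio_insert, Finset.sum_insert (by simp), Finset.sum_insert (by simp)] at hpi
        have heq : ∑ m ∈ Finset.Iio i, u m = ∑ m ∈ Finset.Iio i, v m :=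
          Finset.sum_congr rfl (fun m hm => hi_min m (Finset.mem_Iio.mp hm))
        omega
      -- smallest index j > i with u j > v j
      have htne : (Finset.univ.filter (fun m => i < m ∧ v m < u m)).Nonempty := by
        by_contra h
        have hle : ∀ m, u m ≤ v m := by
          intro m
          rcases lt_trichotomy m i with hm | hm | hm
          · exact (hi_min m hm).le
          · subst hm; exact hilt.le
          · by_contra hgt
            exact h ⟨m, Finset.mem_filter.mpr ⟨Finset.mem_univ m, hm, not_le.mp hgt⟩⟩
        have : ∑ m, u m < ∑ m, v m :=
          Finset.sum_lt_sum (fun m _ => hle m) ⟨i, Finset.mem_univ i, hilt⟩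
        omega
      set j := (Finset.univ.filter (fun m => i < m ∧ v m < u m)).min' htne with hj_def
      have hj_mem : i < j ∧ v j < u j := by
        have := Finset.min'_mem _ htne
        exact (Finset.mem_filter.mp this).2
      have hj_min : ∀ m, i < m → m < j → u m ≤ v m := by
        intro m him hmj
        by_contra hgt
        exact absurd (Finset.min'_le _ m (Finset.mem_filter.mpr
          ⟨Finset.mem_univ m, him, not_le.mp hgt⟩)) (not_le.mpr hmj)
      obtain ⟨hij, hvuj⟩ := hj_mem
      have hjne : u j ≠ 0 := by omega
      set w : Fin n →₀ ℕ := u - Finsupp.single j 1 + Finsupp.single i 1 with hw_def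
      have hmv : BorelMove u w := ⟨i, j, hij, hjne, rfl⟩
      obtain ⟨hwi, hwj, hwo⟩ := move_apply hij.ne hw_def
      have hwb : ∀ m, w m ≤ c m := by
        intro m
        by_cases h1 : m = i
        · subst h1
          have := hv i
          omega
        · by_cases h2 : m = j
          · subst h2
            have := hu j
            omega
          · rw [hwo m h1 h2]
            exact hu m
      have hkey := key_sum hij hjne hw_def
      have hwdom : ∀ k, psum w k ≤ psum v k := by
        intro k
        have hk := hkey (Finset.Iic k)
        have hdk := hdom k
        unfold psum at hdk ⊢
        by_cases hjk : j ∈ Finset.Iic k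
        · have hik : i ∈ Finset.Iic k := by
            simp only [Finset.mem_Iic] at *
            exact hij.le.trans hjk
          rw [if_pos hjk, if_pos hik] at hk
          omega
        · rw [if_neg hjk] at hk
          by_cases hik : i ∈ Finset.Iic k
          · rw [if_pos hik] at hk
            have hstrict : ∑ m ∈ Finset.Iic k, u m < ∑ m ∈ Finset.Iic k, v m := by
              apply Finset.sum_lt_sum
              · intro m hm
                rw [Finset.mem_Iic] at hm
                rcases lt_trichotomy m i with h | h | h
                · exact (hi_min m h).le
                · subst h; exact hilt.le
                · refine hj_min m h (lt_of_le_of_lt hm ?_)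
                  rw [Finset.mem_Iic] at hjk
                  exact not_le.mp hjk
              · exact ⟨i, hik, hilt⟩
            omega
          · rw [if_neg hik] at hk
            omega
      have hwtot : ∑ m, w m = ∑ m, v m := by
        have hk := hkey Finset.univ
        rw [if_pos (Finset.mem_univ j), if_pos (Finset.mem_univ i)] at hk
        omega
      have hwd : ∑ m, ((v m - w m) + (w m - v m)) ≤ d := by
        have hlt : ∑ m, ((v m - w m) + (w m - v m))
            < ∑ m, ((v m - u m) + (u m - v m)) := by
          apply Finset.sum_lt_sum
          · intro m _
            by_cases h1 : m = i
            · subst h1; omega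
            · by_cases h2 : m = j
              · subst h2; omega
              · rw [hwo m h1 h2]
          · exact ⟨i, Finset.mem_univ i, by omega⟩
        omega
      exact Relation.ReflTransGen.head ⟨hmv, hwb⟩ (ih w hwb hwdom hwtot hwd)

end BorelAux

/-- for a `c`-bounded monomial `u`, a `c`-bounded monomial `v` is reachable from `u`
by a chain of Borel moves all of whose intermediate monomials are `c`-bounded if and only if it is
reachable from `u` by an arbitrary chain of Borel moves; i.e. `B^c(u) = B(u)^{≤c}`. -/
theorem stmt_1 {n : ℕ} (c : Fin n → ℕ) (u v : Fin n →₀ ℕ)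
    (hu : ∀ i, u i ≤ c i) (hv : ∀ i, v i ≤ c i) :
    Relation.ReflTransGen (fun a b => BorelMove a b ∧ ∀ i, b i ≤ c i) u v ↔
      Relation.ReflTransGen BorelMove u v := by
  constructor
  · exact Relation.ReflTransGen.mono (p := BorelMove) (fun a b (h : BorelMove a b ∧ ∀ i, b i ≤ c i) => h.1) u v
  · intro h
    obtain ⟨hdom, htot⟩ := BorelAux.chain_dom h
    exact BorelAux.build c v hv _ u hu hdom htot.symm le_rfl
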